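/- Let Ψ be a highest weight vector of U(B₀) with x_1^- nilpotent of degree r, and let λ_j be the eigenvalues of (x_0^+)^{(j)}(x_1^-)^{(j)} on Ψ. Then the reduction relations hold: x_{r+1+m}^- Ψ = Σ_{k=1}^r (-1)^{r-k} λ_{r+1-k} x_{k+m}^- Ψ for all m ≥ 0, and the highest weight eigenvalues satisfy d_{r+1+m} = Σ_{k=1}^r (-1)^{r-k} λ_{r+1-k} d_{k+m} for all m ≥ 0. -/

import Mathlib

open scoped BigOperators

/-- A representation of the Borel subalgebra `U(B₀)` of the `sl₂` loop algebra:
operators `x_k^+, h_k` (`k ≥ 0`) and `x_k^-` (`k ≥ 1`, the value of `xm` at `0`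
being irrelevant) on a complex vector space, satisfying the loop relations. -/
structure BorelRep (V : Type*) [AddCommGroup V] [Module ℂ V] where
  xp : ℕ → Module.End ℂ V
  xm : ℕ → Module.End ℂ V
  h : ℕ → Module.End ℂ V
  h_xp : ∀ j k, ⁅h j, xp k⁆ = 2 • xp (j + k)
  h_xm : ∀ j k, 1 ≤ k → ⁅h j, xm k⁆ = -(2 • xm (j + k))
  xp_xm : ∀ j k, 1 ≤ k → ⁅xp j, xm k⁆ = h (j + k)
  h_h : ∀ j k, ⁅h j, h k⁆ = 0
  xp_xp : ∀ j k, ⁅xp j, xp k⁆ = 0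
  xm_xm : ∀ j k, 1 ≤ j → 1 ≤ k → ⁅xm j, xm k⁆ = 0

/-- The `k`-th elementary symmetric polynomial of `α_1, …, α_n`. -/
noncomputable def esymm {n : ℕ} (α : Fin n → ℂ) (k : ℕ) : ℂ :=
  ∑ s ∈ Finset.powersetCard k (Finset.univ : Finset (Fin n)), ∏ i ∈ s, α i

variable {V : Type*} [AddCommGroup V] [Module ℂ V]

/-- `x_m^+(α) = Σ_{k=0}^n (-1)^k e_k(α) x_{m-k}^+`. -/
noncomputable def xpP (B : BorelRep V) {n : ℕ} (α : Fin n → ℂ) (m : ℕ) :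
    Module.End ℂ V :=
  ∑ k ∈ Finset.range (n + 1), ((-1 : ℂ) ^ k * esymm α k) • B.xp (m - k)

/-- `x_m^-(α) = Σ_{k=0}^n (-1)^k e_k(α) x_{m-k}^-`. -/
noncomputable def xmP (B : BorelRep V) {n : ℕ} (α : Fin n → ℂ) (m : ℕ) :
    Module.End ℂ V :=
  ∑ k ∈ Finset.range (n + 1), ((-1 : ℂ) ^ k * esymm α k) • B.xm (m - k)

/-- `h_m(α) = Σ_{k=0}^n (-1)^k e_k(α) h_{m-k}`. -/
noncomputable def hP (B : BorelRep V) {n : ℕ} (α : Fin n → ℂ) (m : ℕ) :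
    Module.End ℂ V :=
  ∑ k ∈ Finset.range (n + 1), ((-1 : ℂ) ^ k * esymm α k) • B.h (m - k)

/-- The cyclic submodule `U(B₀)Ψ`: the span of all vectors obtained from `Ψ`
by words in the generators. -/
def cyclic (B : BorelRep V) (Ψ : V) : Submodule ℂ V :=
  Submodule.span ℂ {v | ∃ w : List (Module.End ℂ V),
    (∀ f ∈ w, (∃ k, f = B.xp k) ∨ (∃ k, 1 ≤ k ∧ f = B.xm k) ∨ (∃ k, f = B.h k)) ∧
    v = w.prod Ψ}

open Finset Finset.Nat

noncomputable section

namespace LoopModel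

abbrev Free : Type := Multiset ℕ →₀ ℂ

def sgl (μ : Multiset ℕ) : Free := Finsupp.single μ 1

def mult (a : ℕ) : Free →ₗ[ℂ] Free := Finsupp.lmapDomain ℂ ℂ (a ::ₘ ·)

@[simp] lemma mult_sgl (a : ℕ) (μ : Multiset ℕ) : mult a (sgl μ) = sgl (a ::ₘ μ) := by
  simp [mult, sgl, Finsupp.lmapDomain_apply, Finsupp.mapDomain_single]

def ext (g : Multiset ℕ → Free) : Free →ₗ[ℂ] Free :=
  Finsupp.lift Free ℂ (Multiset ℕ) g

@[simp] lemma ext_sgl (g : Multiset ℕ → Free) (μ : Multiset ℕ) : ext g (sgl μ) = g μ := by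
  simp [ext, sgl]

lemma linearMap_ext_sgl {φ ψ : Free →ₗ[ℂ] Free} (h : ∀ μ, φ (sgl μ) = ψ (sgl μ)) : φ = ψ := by
  apply Finsupp.lhom_ext
  intro μ c
  have : (Finsupp.single μ c : Free) = c • sgl μ := by simp [sgl]
  rw [this, map_smul, map_smul, h]

lemma mult_mult (a b : ℕ) (x : Free) : mult a (mult b x) = mult b (mult a x) := by
  have : (mult a).comp (mult b) = (mult b).comp (mult a) := by
    apply linearMap_ext_sgl; intro μ; simp [Multiset.cons_swap]
  exact LinearMap.congr_fun this x

variable (d : ℕ → ℂ)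

/-- model of `h_{e+1}` on a word. -/
def hlist (e : ℕ) : List ℕ → Free
  | [] => d (e + 1) • sgl 0
  | f :: l => mult f (hlist e l) - (2 : ℂ) • sgl ((f + e + 1) ::ₘ (l : Multiset ℕ))

lemma hlist_perm (e : ℕ) {l₁ l₂ : List ℕ} (h : l₁.Perm l₂) : hlist d e l₁ = hlist d e l₂ := by
  induction h with
  | nil => rfl
  | cons x h ih =>
      simp only [hlist, ih, Multiset.coe_eq_coe.mpr h]
  | swap x y l =>
      simp only [hlist, map_sub, map_smul, mult_sgl, ← Multiset.cons_coe]
      rw [Multiset.cons_swap y (x + e + 1), Multiset.cons_swap (y + e + 1) x,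
        mult_mult y x]
      abel
  | trans _ _ ih₁ ih₂ => rw [ih₁, ih₂]

def Hfun (e : ℕ) (μ : Multiset ℕ) : Free :=
  Quot.liftOn μ (hlist d e) fun _ _ h => hlist_perm d e h

@[simp] lemma Hfun_zero (e : ℕ) : Hfun d e 0 = d (e + 1) • sgl 0 := rfl

@[simp] lemma Hfun_cons (e f : ℕ) (μ : Multiset ℕ) :
    Hfun d e (f ::ₘ μ) = mult f (Hfun d e μ) - (2 : ℂ) • sgl ((f + e + 1) ::ₘ μ) := by
  induction μ using Quot.inductionOn
  rfl

/-- model of `x_0^+` on a word. -/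
def alist : List ℕ → Free
  | [] => 0
  | f :: l => mult f (alist l) + Hfun d f (l : Multiset ℕ)

lemma alist_perm {l₁ l₂ : List ℕ} (h : l₁.Perm l₂) : alist d l₁ = alist d l₂ := by
  induction h with
  | nil => rfl
  | cons x h ih =>
      simp only [alist, ih, Multiset.coe_eq_coe.mpr h]
  | swap x y l =>
      simp only [alist, ← Multiset.cons_coe, Hfun_cons, map_add]
      have h3 : y + x + 1 = x + y + 1 := by omega
      rw [h3, mult_mult y x]
      abel
  | trans _ _ ih₁ ih₂ => rw [ih₁, ih₂]

def Afun (μ : Multiset ℕ) : Free :=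
  Quot.liftOn μ (alist d) fun _ _ h => alist_perm d h

@[simp] lemma Afun_zero : Afun d 0 = 0 := rfl

@[simp] lemma Afun_cons (f : ℕ) (μ : Multiset ℕ) :
    Afun d (f ::ₘ μ) = mult f (Afun d μ) + Hfun d f μ := by
  induction μ using Quot.inductionOn
  rfl

def Hop (e : ℕ) : Free →ₗ[ℂ] Free := ext (Hfun d e)

def Aop : Free →ₗ[ℂ] Free := ext (Afun d)

@[simp] lemma Hop_sgl (e : ℕ) (μ : Multiset ℕ) : Hop d e (sgl μ) = Hfun d e μ := ext_sgl _ _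

@[simp] lemma Aop_sgl (μ : Multiset ℕ) : Aop d (sgl μ) = Afun d μ := ext_sgl _ _

lemma Hop_mult (e f : ℕ) (x : Free) :
    Hop d e (mult f x) = mult f (Hop d e x) - (2 : ℂ) • mult (f + e + 1) x := by
  have : (Hop d e).comp (mult f)
      = (mult f).comp (Hop d e) - (2 : ℂ) • mult (f + e + 1) := by
    apply linearMap_ext_sgl; intro μ
    simp [Hfun_cons]
  simpa using LinearMap.congr_fun this x

lemma Aop_mult (f : ℕ) (x : Free) :
    Aop d (mult f x) = mult f (Aop d x) + Hop d f x := by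
  have : (Aop d).comp (mult f) = (mult f).comp (Aop d) + Hop d f := by
    apply linearMap_ext_sgl; intro μ
    simp [Afun_cons]
  simpa using LinearMap.congr_fun this x

/-! ### universal eigenvalue polynomials -/

def Lam : ℕ → ℂ
  | 0 => 1
  | j + 1 =>
      ((j : ℂ) + 1)⁻¹ * ∑ p ∈ (antidiagonal j).attach,
        (-1 : ℂ) ^ (p.1.1) * d (p.1.1 + 1) * Lam p.1.2
  decreasing_by
    have := Finset.HasAntidiagonal.antidiagonal.snd_le p.2
    omega

@[simp] lemma Lam_zero : Lam d 0 = 1 := by rw [Lam]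

lemma Lam_succ (j : ℕ) :
    Lam d (j + 1) = ((j : ℂ) + 1)⁻¹ * ∑ p ∈ antidiagonal j,
      (-1 : ℂ) ^ p.1 * d (p.1 + 1) * Lam d p.2 := by
  rw [Lam]
  congr 1
  exact Finset.sum_attach (antidiagonal j) (fun p => (-1 : ℂ) ^ p.1 * d (p.1 + 1) * Lam d p.2)

lemma newton (j : ℕ) :
    ∑ p ∈ antidiagonal j, (-1 : ℂ) ^ p.1 * d (p.1 + 1) * Lam d p.2
      = ((j : ℂ) + 1) * Lam d (j + 1) := by
  rw [Lam_succ]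
  have : ((j : ℂ) + 1) ≠ 0 := Nat.cast_add_one_ne_zero j
  field_simp

/-! ### the symmetric objects G and W -/

def G : ℕ → ℕ → Free
  | 0, j => Lam d j • sgl 0
  | L + 1, j => ∑ p ∈ antidiagonal j, ((-1 : ℂ) ^ p.1) • mult p.1 (G L p.2)

lemma G_zero (j : ℕ) : G d 0 j = Lam d j • sgl 0 := rfl

lemma G_succ (L j : ℕ) :
    G d (L + 1) j = ∑ p ∈ antidiagonal j, ((-1 : ℂ) ^ p.1) • mult p.1 (G d L p.2) := rfl

def Wd (L j : ℕ) : Free := ∑ p ∈ antidiagonal j, ((-1 : ℂ) ^ p.1) • Hop d p.1 (G d L p.2)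

/-! ### sum reindexing helpers -/

lemma sum_ad_swap {M : Type*} [AddCommMonoid M] (n : ℕ) (F : ℕ → ℕ → ℕ → M) :
    ∑ p ∈ antidiagonal n, ∑ q ∈ antidiagonal p.2, F p.1 q.1 q.2
      = ∑ p ∈ antidiagonal n, ∑ q ∈ antidiagonal p.2, F q.1 p.1 q.2 := by
  rw [Finset.sum_sigma', Finset.sum_sigma']
  refine Finset.sum_nbij' (fun x => ⟨(x.2.1, x.1.1 + x.2.2), (x.1.1, x.2.2)⟩)
    (fun x => ⟨(x.2.1, x.1.1 + x.2.2), (x.1.1, x.2.2)⟩) ?_ ?_ ?_ ?_ ?_ <;>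
    rintro ⟨⟨e, k⟩, ⟨f, m⟩⟩ hx <;>
    simp only [Finset.mem_sigma, HasAntidiagonal.mem_antidiagonal, and_true, true_and] at hx ⊢ <;>
    first
      | omega
      | rfl
      | (obtain ⟨h1, h2⟩ := hx; subst h2; rfl)

lemma sum_ad_collapse {M : Type*} [AddCommMonoid M] (n : ℕ) (F : ℕ → ℕ → M) :
    ∑ p ∈ antidiagonal n, ∑ q ∈ antidiagonal p.2, F (p.1 + q.1) q.2
      = ∑ p ∈ antidiagonal n, (p.1 + 1) • F p.1 p.2 := by
  have hr : ∀ p : ℕ × ℕ, (p.1 + 1) • F p.1 p.2 = ∑ _q ∈ antidiagonal p.1, F p.1 p.2 := by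
    intro p
    rw [Finset.sum_const, card_antidiagonal]
  rw [Finset.sum_congr rfl fun p _ => hr p]
  rw [Finset.sum_sigma', Finset.sum_sigma']
  refine Finset.sum_nbij' (fun x => ⟨(x.1.1 + x.2.1, x.2.2), (x.1.1, x.2.1)⟩)
    (fun x => ⟨(x.2.1, x.2.2 + x.1.2), (x.2.2, x.1.2)⟩) ?_ ?_ ?_ ?_ ?_ <;>
    rintro ⟨⟨e, k⟩, ⟨f, m⟩⟩ hx <;>
    simp only [Finset.mem_sigma, HasAntidiagonal.mem_antidiagonal, and_true, true_and] at hx ⊢ <;>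
    first
      | omega
      | rfl
      | (obtain ⟨h1, h2⟩ := hx; subst h2; rfl)

lemma Wd_zero (j : ℕ) : Wd d 0 j = (((j : ℂ) + 1) * Lam d (j + 1)) • sgl 0 := by
  rw [Wd]
  have h : ∀ p ∈ antidiagonal j, ((-1 : ℂ) ^ p.1) • Hop d p.1 (G d 0 p.2)
      = ((-1 : ℂ) ^ p.1 * d (p.1 + 1) * Lam d p.2) • sgl 0 := by
    intro p _
    rw [G_zero, map_smul, Hop_sgl, Hfun_zero]
    module
  rw [Finset.sum_congr rfl h, ← Finset.sum_smul, newton]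

lemma Wrec (L j : ℕ) :
    Wd d (L + 1) j
      = (∑ p ∈ antidiagonal j, ((-1 : ℂ) ^ p.1) • mult p.1 (Wd d L p.2))
        + ∑ p ∈ antidiagonal (j + 1), ((-1 : ℂ) ^ p.1 * (2 * p.1)) • mult p.1 (G d L p.2) := by
  have step1 : Wd d (L + 1) j
      = (∑ p ∈ antidiagonal j, ∑ q ∈ antidiagonal p.2,
          ((-1 : ℂ) ^ (p.1 + q.1)) • mult q.1 (Hop d p.1 (G d L q.2)))
        - ∑ p ∈ antidiagonal j, ∑ q ∈ antidiagonal p.2,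
          ((-1 : ℂ) ^ (p.1 + q.1) * 2) • mult (p.1 + q.1 + 1) (G d L q.2) := by
    rw [Wd, ← Finset.sum_sub_distrib]
    refine Finset.sum_congr rfl fun p _ => ?_
    rw [G_succ, map_sum, Finset.smul_sum, ← Finset.sum_sub_distrib]
    refine Finset.sum_congr rfl fun q _ => ?_
    rw [map_smul, Hop_mult]
    have h3 : q.1 + p.1 + 1 = p.1 + q.1 + 1 := by omega
    rw [h3, pow_add]
    module
  have hA : (∑ p ∈ antidiagonal j, ∑ q ∈ antidiagonal p.2,
        ((-1 : ℂ) ^ (q.1 + p.1)) • mult p.1 (Hop d q.1 (G d L q.2)))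
      = ∑ p ∈ antidiagonal j, ((-1 : ℂ) ^ p.1) • mult p.1 (Wd d L p.2) := by
    refine Finset.sum_congr rfl fun p _ => ?_
    rw [Wd, map_sum, Finset.smul_sum]
    refine Finset.sum_congr rfl fun q _ => ?_
    rw [pow_add, map_smul]
    module
  have hB : ∑ p ∈ antidiagonal (j + 1), ((-1 : ℂ) ^ p.1 * (2 * p.1)) • mult p.1 (G d L p.2)
      = - ∑ p ∈ antidiagonal j,
          (p.1 + 1) • (((-1 : ℂ) ^ p.1 * 2) • mult (p.1 + 1) (G d L p.2)) := by
    rw [antidiagonal_succ, Finset.sum_cons, Finset.sum_map]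
    have h0 : ((-1 : ℂ) ^ (0, j+1).1 * (2 * ((0, j+1).1 : ℕ))) • mult (0, j+1).1 (G d L (0, j+1).2)
        = 0 := by
      simp
    rw [h0, zero_add, ← Finset.sum_neg_distrib]
    refine Finset.sum_congr rfl fun p _ => ?_
    simp only [Function.Embedding.coe_prodMap, Function.Embedding.coeFn_mk,
      Function.Embedding.refl_apply, Prod.map_fst, Prod.map_snd, Nat.succ_eq_add_one]
    rw [← Nat.cast_smul_eq_nsmul ℂ (p.1 + 1)]
    have hs : (-1 : ℂ) ^ (p.1 + 1) = -(-1 : ℂ) ^ p.1 := by ring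
    rw [hs]
    push_cast
    module
  rw [step1, sum_ad_swap j (fun x y m => ((-1 : ℂ) ^ (x + y)) • mult y (Hop d x (G d L m))),
    sum_ad_collapse j (fun g m => ((-1 : ℂ) ^ g * 2) • mult (g + 1) (G d L m)), hA, hB]
  abel

lemma extend_ad (j : ℕ) (T : ℕ × ℕ → Free) (h : T (j + 1, 0) = 0) :
    ∑ P ∈ antidiagonal (j + 1), T P = ∑ p ∈ antidiagonal j, T (p.1, p.2 + 1) := by
  rw [antidiagonal_succ', Finset.sum_cons, h, zero_add, Finset.sum_map]
  refine Finset.sum_congr rfl fun p _ => ?_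
  have hp : (Function.Embedding.prodMap (Function.Embedding.refl ℕ)
      ⟨Nat.succ, Nat.succ_injective⟩) p = (p.1, p.2 + 1) := by
    ext <;> simp [Nat.succ_eq_add_one]
  rw [hp]

lemma antisym (L n : ℕ) :
    ∑ p ∈ antidiagonal n, ∑ q ∈ antidiagonal p.2,
      (((-1 : ℂ) ^ (p.1 + q.1)) * ((q.1 : ℂ) - (p.1 : ℂ))) • mult p.1 (mult q.1 (G d L q.2))
      = 0 := by
  set S := ∑ p ∈ antidiagonal n, ∑ q ∈ antidiagonal p.2,
      (((-1 : ℂ) ^ (p.1 + q.1)) * ((q.1 : ℂ) - (p.1 : ℂ))) • mult p.1 (mult q.1 (G d L q.2))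
    with hS
  have h := sum_ad_swap n
    (fun x y m => (((-1 : ℂ) ^ (x + y)) * ((y : ℂ) - (x : ℂ))) • mult x (mult y (G d L m)))
  have h3 : S = -S := by
    rw [hS]
    nth_rewrite 1 [h]
    rw [← Finset.sum_neg_distrib]
    refine Finset.sum_congr rfl fun p _ => ?_
    rw [← Finset.sum_neg_distrib]
    refine Finset.sum_congr rfl fun q _ => ?_
    rw [mult_mult]
    have h4 : q.1 + p.1 = p.1 + q.1 := by omega
    rw [h4]
    module
  have h5 : (2 : ℂ) • S = 0 := by
    rw [two_smul]
    nth_rewrite 1 [h3]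
    exact neg_add_cancel S
  rcases smul_eq_zero.mp h5 with h6 | h6
  · exact absurd h6 two_ne_zero
  · exact h6

lemma LW : ∀ L j : ℕ, Wd d (L + 1) j
    = ∑ P ∈ antidiagonal (j + 1),
        ((-1 : ℂ) ^ P.1 * (((j : ℂ) + 1) + ((L : ℂ) + 1) * P.1)) • mult P.1 (G d L P.2) := by
  intro L
  induction L with
  | zero =>
      intro j
      rw [Wrec]
      have h1 : ∀ p ∈ antidiagonal j, ((-1 : ℂ) ^ p.1) • mult p.1 (Wd d 0 p.2)
          = ((-1 : ℂ) ^ p.1 * (((p.2 + 1 : ℕ) : ℂ))) • mult p.1 (G d 0 (p.2 + 1)) := by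
        intro p _
        rw [Wd_zero, G_zero, map_smul, map_smul]
        push_cast
        module
      rw [Finset.sum_congr rfl h1,
        ← extend_ad j (fun P => ((-1 : ℂ) ^ P.1 * ((P.2 : ℕ) : ℂ)) • mult P.1 (G d 0 P.2))
          (by simp), ← Finset.sum_add_distrib]
      refine Finset.sum_congr rfl fun P hP => ?_
      rw [HasAntidiagonal.mem_antidiagonal] at hP
      rw [← add_smul]
      congr 1
      have e1 : (P.1 : ℂ) + (P.2 : ℂ) = (j : ℂ) + 1 := by exact_mod_cast hP
      push_cast
      linear_combination ((-1 : ℂ) ^ P.1) * e1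
  | succ L ih =>
      intro j
      rw [Wrec]
      -- first piece : rewrite with ih and extend to the full antidiagonal of j+1
      have h1 : ∀ p ∈ antidiagonal j, ((-1 : ℂ) ^ p.1) • mult p.1 (Wd d (L + 1) p.2)
          = ∑ q ∈ antidiagonal (p.2 + 1),
              ((-1 : ℂ) ^ (p.1 + q.1) * (((q.1 + q.2 : ℕ) : ℂ) + ((L : ℂ) + 1) * q.1))
                • mult p.1 (mult q.1 (G d L q.2)) := by
        intro p _
        rw [ih p.2, map_sum, Finset.smul_sum]
        refine Finset.sum_congr rfl fun q hq => ?_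
        rw [HasAntidiagonal.mem_antidiagonal] at hq
        rw [map_smul, pow_add]
        have hc : ((p.2 : ℂ) + 1) = ((q.1 + q.2 : ℕ) : ℂ) := by push_cast [hq]; ring
        rw [hc]
        module
      rw [Finset.sum_congr rfl h1,
        ← extend_ad j (fun P => ∑ q ∈ antidiagonal P.2,
            ((-1 : ℂ) ^ (P.1 + q.1) * (((q.1 + q.2 : ℕ) : ℂ) + ((L : ℂ) + 1) * q.1))
              • mult P.1 (mult q.1 (G d L q.2)))
          (by simp),
        sum_ad_swap (j + 1) (fun x y m =>
          ((-1 : ℂ) ^ (x + y) * (((y + m : ℕ) : ℂ) + ((L : ℂ) + 1) * y))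
            • mult x (mult y (G d L m)))]
      -- second piece : expand G (L+1)
      have h2 : ∀ P ∈ antidiagonal (j + 1),
          ((-1 : ℂ) ^ P.1 * (2 * P.1)) • mult P.1 (G d (L + 1) P.2)
          = ∑ q ∈ antidiagonal P.2,
              ((-1 : ℂ) ^ (P.1 + q.1) * (2 * P.1)) • mult P.1 (mult q.1 (G d L q.2)) := by
        intro P _
        rw [G_succ, map_sum, Finset.smul_sum]
        refine Finset.sum_congr rfl fun q _ => ?_
        rw [map_smul, pow_add]
        module
      rw [Finset.sum_congr rfl h2]
      -- target : expand G (L+1) as well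
      have h3 : ∀ P ∈ antidiagonal (j + 1),
          ((-1 : ℂ) ^ P.1 * (((j : ℂ) + 1) + (((L + 1 : ℕ) : ℂ) + 1) * P.1))
              • mult P.1 (G d (L + 1) P.2)
          = ∑ q ∈ antidiagonal P.2,
              ((-1 : ℂ) ^ (P.1 + q.1) * (((j : ℂ) + 1) + (((L + 1 : ℕ) : ℂ) + 1) * P.1))
                • mult P.1 (mult q.1 (G d L q.2)) := by
        intro P _
        rw [G_succ, map_sum, Finset.smul_sum]
        refine Finset.sum_congr rfl fun q _ => ?_
        rw [map_smul, pow_add]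
        module
      rw [Finset.sum_congr rfl h3, ← Finset.sum_add_distrib, ← sub_eq_zero,
        ← Finset.sum_sub_distrib]
      -- the difference is the antisymmetric vanishing sum
      have hD := antisym d L (j + 1)
      have hD' : ∑ p ∈ antidiagonal (j + 1), ∑ q ∈ antidiagonal p.2,
          (((-1 : ℂ) ^ (p.1 + q.1)) * ((p.1 : ℂ) - (q.1 : ℂ)))
            • mult p.1 (mult q.1 (G d L q.2)) = 0 := by
        have hneg : ∀ p ∈ antidiagonal (j + 1), ∀ q ∈ antidiagonal p.2,
            (((-1 : ℂ) ^ (p.1 + q.1)) * ((p.1 : ℂ) - (q.1 : ℂ)))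
              • mult p.1 (mult q.1 (G d L q.2))
            = -((((-1 : ℂ) ^ (p.1 + q.1)) * ((q.1 : ℂ) - (p.1 : ℂ)))
              • mult p.1 (mult q.1 (G d L q.2))) := by
          intro p _ q _
          module
        rw [Finset.sum_congr rfl fun p hp => Finset.sum_congr rfl (hneg p hp),
          Finset.sum_congr rfl fun p (_ : p ∈ antidiagonal (j + 1)) =>
            (Finset.sum_neg_distrib (s := antidiagonal p.2) _),
          Finset.sum_neg_distrib, hD, neg_zero]
      rw [← hD']
      refine Finset.sum_congr rfl fun P hP => ?_
      rw [← Finset.sum_add_distrib, ← Finset.sum_sub_distrib]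
      refine Finset.sum_congr rfl fun q hq => ?_
      rw [HasAntidiagonal.mem_antidiagonal] at hP hq
      rw [mult_mult q.1 P.1]
      have e0 : q.1 + P.1 = P.1 + q.1 := by omega
      rw [e0, ← add_smul, ← sub_smul]
      congr 1
      have e1 : (P.1 : ℂ) + (P.2 : ℂ) = (j : ℂ) + 1 := by exact_mod_cast hP
      have e2 : (q.1 : ℂ) + (q.2 : ℂ) = (P.2 : ℂ) := by exact_mod_cast hq
      push_cast
      linear_combination ((-1 : ℂ) ^ (P.1 + q.1)) * (e1 + e2)

lemma KEY : ∀ L j : ℕ, Aop d (G d (L + 1) j)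
    = ((((L : ℕ) : ℂ) + 1) * (((j : ℕ) : ℂ) + 1)) • G d L (j + 1) := by
  intro L
  induction L with
  | zero =>
      intro j
      rw [G_succ, map_sum]
      have h1 : ∀ p ∈ antidiagonal j, Aop d (((-1 : ℂ) ^ p.1) • mult p.1 (G d 0 p.2))
          = ((-1 : ℂ) ^ p.1 * d (p.1 + 1) * Lam d p.2) • sgl 0 := by
        intro p _
        rw [map_smul, Aop_mult, G_zero]
        simp only [map_smul, Aop_sgl, Afun_zero, Hop_sgl, Hfun_zero, smul_zero, map_zero]
        module
      rw [Finset.sum_congr rfl h1, ← Finset.sum_smul, newton, G_zero]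
      module
  | succ L ih =>
      intro j
      have hexp : Aop d (G d (L + 1 + 1) j)
          = (∑ p ∈ antidiagonal j,
              ((-1 : ℂ) ^ p.1 * (((L : ℂ) + 1) * ((p.2 + 1 : ℕ) : ℂ)))
                • mult p.1 (G d L (p.2 + 1)))
            + Wd d (L + 1) j := by
        rw [G_succ, map_sum, Wd, ← Finset.sum_add_distrib]
        refine Finset.sum_congr rfl fun p _ => ?_
        rw [map_smul, Aop_mult, ih p.2, map_smul]
        push_cast
        module
      rw [hexp, LW,
        ← extend_ad j (fun P => ((-1 : ℂ) ^ P.1 * (((L : ℂ) + 1) * ((P.2 : ℕ) : ℂ)))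
            • mult P.1 (G d L P.2)) (by simp),
        ← Finset.sum_add_distrib, G_succ, Finset.smul_sum]
      refine Finset.sum_congr rfl fun P hP => ?_
      rw [HasAntidiagonal.mem_antidiagonal] at hP
      rw [smul_smul, ← add_smul]
      congr 1
      have e1 : (P.1 : ℂ) + (P.2 : ℂ) = (j : ℂ) + 1 := by exact_mod_cast hP
      push_cast
      linear_combination (((L : ℂ) + 1) * ((-1 : ℂ) ^ P.1)) * e1

lemma G_base : ∀ n : ℕ, sgl (Multiset.replicate n 0) = G d n 0 := by
  intro n
  induction n with
  | zero => simp [G_zero]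
  | succ n ih =>
      rw [G_succ, antidiagonal_zero, Finset.sum_singleton, Multiset.replicate_succ, ← ih]
      simp

lemma model_main (n : ℕ) : ∀ j, j ≤ n →
    ((Aop d) ^ j) (G d n 0)
      = ((n.descFactorial j * j.factorial : ℕ) : ℂ) • G d (n - j) j := by
  intro j
  induction j with
  | zero => intro _; simp
  | succ j ihj =>
      intro h
      have hL : n - j = (n - (j + 1)) + 1 := by omega
      rw [pow_succ', Module.End.mul_apply, ihj (by omega), map_smul, hL, KEY, smul_smul]
      congr 1
      have hnat : n.descFactorial (j + 1) * (j + 1).factorial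
          = (n.descFactorial j * j.factorial) * (((n - (j + 1)) + 1) * (j + 1)) := by
        rw [← hL, Nat.descFactorial_succ, Nat.factorial_succ]
        ring
      rw [hnat]
      push_cast
      ring



/-! ### the representation side : equivariance of the model -/

section Rep

variable {V : Type*} [AddCommGroup V] [Module ℂ V]

lemma single_eq_smul_sgl (μ : Multiset ℕ) (c : ℂ) :
    (Finsupp.single μ c : Free) = c • sgl μ := by
  simp [sgl]

lemma xm_comm (B : BorelRep V) (a b : ℕ) (v : V) :
    B.xm (a + 1) (B.xm (b + 1) v) = B.xm (b + 1) (B.xm (a + 1) v) := by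
  have h := B.xm_xm (a + 1) (b + 1) (by omega) (by omega)
  rw [Ring.lie_def, sub_eq_zero] at h
  have h2 : (B.xm (a + 1) * B.xm (b + 1)) v = (B.xm (b + 1) * B.xm (a + 1)) v := by rw [h]
  simpa [Module.End.mul_apply] using h2

def philist (B : BorelRep V) (Ψ : V) : List ℕ → V
  | [] => Ψ
  | e :: l => B.xm (e + 1) (philist B Ψ l)

lemma philist_perm (B : BorelRep V) (Ψ : V) {l₁ l₂ : List ℕ} (h : l₁.Perm l₂) :
    philist B Ψ l₁ = philist B Ψ l₂ := by
  induction h with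
  | nil => rfl
  | cons x h ih => simp only [philist, ih]
  | swap x y l => exact xm_comm B y x _
  | trans _ _ ih₁ ih₂ => rw [ih₁, ih₂]

def Phi (B : BorelRep V) (Ψ : V) (μ : Multiset ℕ) : V :=
  Quot.liftOn μ (philist B Ψ) fun _ _ h => philist_perm B Ψ h

@[simp] lemma Phi_zero (B : BorelRep V) (Ψ : V) : Phi B Ψ 0 = Ψ := rfl

@[simp] lemma Phi_cons (B : BorelRep V) (Ψ : V) (e : ℕ) (μ : Multiset ℕ) :
    Phi B Ψ (e ::ₘ μ) = B.xm (e + 1) (Phi B Ψ μ) := by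
  induction μ using Quot.inductionOn
  rfl

def theta (B : BorelRep V) (Ψ : V) : Free →ₗ[ℂ] V :=
  Finsupp.lift V ℂ (Multiset ℕ) (Phi B Ψ)

@[simp] lemma theta_sgl (B : BorelRep V) (Ψ : V) (μ : Multiset ℕ) :
    theta B Ψ (sgl μ) = Phi B Ψ μ := by
  simp [theta, sgl]

variable (B : BorelRep V) (Ψ : V) (d : ℕ → ℂ)

lemma theta_mult (a : ℕ) (x : Free) :
    theta B Ψ (mult a x) = B.xm (a + 1) (theta B Ψ x) := by
  induction x using Finsupp.induction_linear with
  | zero => simp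
  | add u v hu hv =>
      simp only [map_add, hu, hv]
  | single μ c =>
      rw [single_eq_smul_sgl, map_smul, map_smul, map_smul, mult_sgl,
        theta_sgl, theta_sgl, Phi_cons]
      exact (map_smul (B.xm (a + 1)) c _).symm

lemma theta_Hfun (hhΨ : ∀ k, B.h k Ψ = d k • Ψ) (e : ℕ) (μ : Multiset ℕ) :
    theta B Ψ (Hfun d e μ) = B.h (e + 1) (Phi B Ψ μ) := by
  induction μ using Multiset.induction_on with
  | empty =>
      rw [Hfun_zero, map_smul, theta_sgl, Phi_zero]
      exact (hhΨ (e + 1)).symm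
  | cons a μ ih =>
      rw [Hfun_cons, map_sub, map_smul, theta_mult, ih, theta_sgl, Phi_cons, Phi_cons]
      have hb := B.h_xm (e + 1) (a + 1) (by omega)
      rw [Ring.lie_def, sub_eq_iff_eq_add] at hb
      have h2 : (B.h (e + 1) * B.xm (a + 1)) (Phi B Ψ μ)
          = (-(2 • B.xm (e + 1 + (a + 1))) + B.xm (a + 1) * B.h (e + 1)) (Phi B Ψ μ) := by
        rw [hb]
      simp only [Module.End.mul_apply, LinearMap.add_apply, LinearMap.neg_apply,
        LinearMap.smul_apply] at h2
      rw [h2]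
      have h3 : a + e + 1 + 1 = e + 1 + (a + 1) := by omega
      rw [h3]
      have h4 : (2 : ℂ) • B.xm (e + 1 + (a + 1)) (Phi B Ψ μ)
          = (2 : ℕ) • B.xm (e + 1 + (a + 1)) (Phi B Ψ μ) := by
        rw [← Nat.cast_smul_eq_nsmul ℂ]
        norm_num
      rw [h4]
      abel

lemma theta_H (hhΨ : ∀ k, B.h k Ψ = d k • Ψ) (e : ℕ) (x : Free) :
    theta B Ψ (Hop d e x) = B.h (e + 1) (theta B Ψ x) := by
  induction x using Finsupp.induction_linear with
  | zero => simp
  | add u v hu hv =>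
      simp only [map_add, hu, hv]
  | single μ c =>
      rw [single_eq_smul_sgl, map_smul, map_smul, map_smul, Hop_sgl,
        theta_sgl, theta_Hfun B Ψ d hhΨ]
      exact (map_smul (B.h (e + 1)) c _).symm

lemma theta_Afun (hxpΨ : ∀ k, B.xp k Ψ = 0) (hhΨ : ∀ k, B.h k Ψ = d k • Ψ)
    (μ : Multiset ℕ) : theta B Ψ (Afun d μ) = B.xp 0 (Phi B Ψ μ) := by
  induction μ using Multiset.induction_on with
  | empty => rw [Afun_zero, map_zero, Phi_zero, hxpΨ]
  | cons a μ ih =>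
      rw [Afun_cons, map_add, theta_mult, ih, theta_Hfun B Ψ d hhΨ, Phi_cons]
      have hb := B.xp_xm 0 (a + 1) (by omega)
      rw [Ring.lie_def, sub_eq_iff_eq_add] at hb
      have h2 : (B.xp 0 * B.xm (a + 1)) (Phi B Ψ μ)
          = (B.h (0 + (a + 1)) + B.xm (a + 1) * B.xp 0) (Phi B Ψ μ) := by rw [hb]
      simp only [Module.End.mul_apply, LinearMap.add_apply] at h2
      rw [h2]
      have h3 : 0 + (a + 1) = a + 1 := by omega
      rw [h3]
      abel

lemma theta_A (hxpΨ : ∀ k, B.xp k Ψ = 0) (hhΨ : ∀ k, B.h k Ψ = d k • Ψ) (x : Free) :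
    theta B Ψ (Aop d x) = B.xp 0 (theta B Ψ x) := by
  induction x using Finsupp.induction_linear with
  | zero => simp
  | add u v hu hv =>
      simp only [map_add, hu, hv]
  | single μ c =>
      rw [single_eq_smul_sgl, map_smul, map_smul, map_smul, Aop_sgl,
        theta_sgl, theta_Afun B Ψ d hxpΨ hhΨ]
      exact (map_smul (B.xp 0) c _).symm

lemma theta_pow (hxpΨ : ∀ k, B.xp k Ψ = 0) (hhΨ : ∀ k, B.h k Ψ = d k • Ψ) (j : ℕ)
    (x : Free) : theta B Ψ (((Aop d) ^ j) x) = ((B.xp 0) ^ j) (theta B Ψ x) := by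
  induction j generalizing x with
  | zero => simp
  | succ j ih =>
      rw [pow_succ, pow_succ, Module.End.mul_apply, Module.End.mul_apply, ih,
        theta_A B Ψ d hxpΨ hhΨ]

lemma theta_replicate (n : ℕ) :
    theta B Ψ (sgl (Multiset.replicate n 0)) = ((B.xm 1) ^ n) Ψ := by
  rw [theta_sgl]
  induction n with
  | zero => simp
  | succ n ih => rw [Multiset.replicate_succ, Phi_cons, ih, pow_succ', Module.End.mul_apply]

end Rep

end LoopModel

end

open LoopModel Finset Finset.Nat

/-- Reduction relations: if `Ψ` is a highest weight vector of `U(B₀)` with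
`x_1^-` nilpotent of degree `r` and eigenvalues
`(x_0^+)^{(j)}(x_1^-)^{(j)} Ψ = λ_j Ψ`, then for all `m ≥ 0`
`x_{r+1+m}^- Ψ = Σ_{k=1}^r (-1)^{r-k} λ_{r+1-k} x_{k+m}^- Ψ` and
`d_{r+1+m} = Σ_{k=1}^r (-1)^{r-k} λ_{r+1-k} d_{k+m}`. -/
theorem stmt12 (B : BorelRep V) (Ψ : V) (d : ℕ → ℂ)
    (hxpΨ : ∀ k, B.xp k Ψ = 0) (hhΨ : ∀ k, B.h k Ψ = d k • Ψ)
    (r : ℕ) (hnil : ((B.xm 1) ^ (r + 1)) Ψ = 0) (hnz : ((B.xm 1) ^ r) Ψ ≠ 0)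
    (lam : ℕ → ℂ)
    (hlam : ∀ j, 1 ≤ j → j ≤ r → (((B.xp 0) ^ j) * ((B.xm 1) ^ j)) Ψ
      = (((j.factorial : ℂ)) ^ 2 * lam j) • Ψ) :
    (∀ m : ℕ, B.xm (r + 1 + m) Ψ
      = ∑ k ∈ Finset.Icc 1 r,
          ((-1 : ℂ) ^ (r - k) * lam (r + 1 - k)) • B.xm (k + m) Ψ) ∧
    (∀ m : ℕ, d (r + 1 + m)
      = ∑ k ∈ Finset.Icc 1 r,
          (-1 : ℂ) ^ (r - k) * lam (r + 1 - k) * d (k + m)) := by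
  classical
  have hΨ : Ψ ≠ 0 := by
    intro h0
    exact hnz (by rw [h0, map_zero])
  have scalar_eq : ∀ a b : ℂ, a • Ψ = b • Ψ → a = b := by
    intro a b hab
    have h1 : (a - b) • Ψ = 0 := by rw [sub_smul, hab, sub_self]
    rcases smul_eq_zero.mp h1 with h | h
    · exact sub_eq_zero.mp h
    · exact absurd h hΨ
  -- the value of `θ ∘ A^j` on the basic vector
  have htheta : ∀ n j : ℕ, j ≤ n →
      ((B.xp 0) ^ j) (((B.xm 1) ^ n) Ψ)
        = ((n.descFactorial j * j.factorial : ℕ) : ℂ) • theta B Ψ (G d (n - j) j) := by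
    intro n j hj
    rw [← theta_replicate B Ψ n, ← theta_pow B Ψ d hxpΨ hhΨ, G_base d n, model_main d n j hj,
      map_smul]
  -- identification of the abstract eigenvalues with the universal ones
  have hlam' : ∀ j, 1 ≤ j → j ≤ r → Lam d j = lam j := by
    intro j h1 h2
    have e1 := htheta j j le_rfl
    rw [Nat.sub_self, G_zero, map_smul, theta_sgl, Phi_zero, Nat.descFactorial_self] at e1
    have e2 := hlam j h1 h2
    rw [Module.End.mul_apply, e1, smul_smul] at e2
    have e3 := scalar_eq _ _ e2
    have hf : (j.factorial : ℂ) ≠ 0 := Nat.cast_ne_zero.mpr (Nat.factorial_ne_zero j)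
    rw [pow_two] at e3
    push_cast at e3
    exact mul_left_cancel₀ (mul_ne_zero hf hf) e3
  -- the basic vanishing relation
  have hvan : ∑ p ∈ antidiagonal r,
      ((-1 : ℂ) ^ p.1 * Lam d p.2) • B.xm (p.1 + 1) Ψ = 0 := by
    have e1 := htheta (r + 1) r (by omega)
    have hr1 : r + 1 - r = 1 := by omega
    rw [hr1, hnil, map_zero] at e1
    have hcoef : (((r + 1).descFactorial r * r.factorial : ℕ) : ℂ) ≠ 0 := by
      refine Nat.cast_ne_zero.mpr (Nat.mul_ne_zero ?_ (Nat.factorial_ne_zero r))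
      intro h0
      have := Nat.descFactorial_eq_zero_iff_lt.mp h0
      omega
    have e2 : theta B Ψ (G d 1 r) = 0 := by
      rcases smul_eq_zero.mp e1.symm with h | h
      · exact absurd h hcoef
      · exact h
    rw [G_succ, map_sum] at e2
    rw [← e2]
    refine Finset.sum_congr rfl fun p _ => ?_
    simp only [G_zero, map_smul, theta_mult, theta_sgl, Phi_zero, smul_smul]
    try module
  -- lowering identities
  have hstep : ∀ j, 1 ≤ j → B.h 1 (B.xm j Ψ)
      = d 1 • B.xm j Ψ - (2 : ℂ) • B.xm (j + 1) Ψ := by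
    intro j hj
    have hb := B.h_xm 1 j hj
    rw [Ring.lie_def, sub_eq_iff_eq_add] at hb
    have h2 : (B.h 1 * B.xm j) Ψ = (-(2 • B.xm (1 + j)) + B.xm j * B.h 1) Ψ := by rw [hb]
    simp only [Module.End.mul_apply, LinearMap.add_apply, LinearMap.neg_apply,
      LinearMap.smul_apply] at h2
    rw [h2, hhΨ 1, map_smul]
    have h3 : 1 + j = j + 1 := by omega
    rw [h3]
    have h4 : (2 : ℂ) • B.xm (j + 1) Ψ = (2 : ℕ) • B.xm (j + 1) Ψ := by
      rw [← Nat.cast_smul_eq_nsmul ℂ]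
      norm_num
    rw [h4]
    abel
  have hxp0 : ∀ j, 1 ≤ j → B.xp 0 (B.xm j Ψ) = d j • Ψ := by
    intro j hj
    have hb := B.xp_xm 0 j hj
    rw [Ring.lie_def, sub_eq_iff_eq_add] at hb
    have h2 : (B.xp 0 * B.xm j) Ψ = (B.h (0 + j) + B.xm j * B.xp 0) Ψ := by rw [hb]
    simp only [Module.End.mul_apply, LinearMap.add_apply] at h2
    rw [h2, hxpΨ 0, map_zero, add_zero, Nat.zero_add, hhΨ]
  -- part 1
  have part1 : ∀ m : ℕ, B.xm (r + 1 + m) Ψ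
      = ∑ k ∈ Finset.Icc 1 r,
          ((-1 : ℂ) ^ (r - k) * lam (r + 1 - k)) • B.xm (k + m) Ψ := by
    intro m
    induction m with
    | zero =>
        rw [Finset.Nat.sum_antidiagonal_eq_sum_range_succ_mk, Finset.sum_range_succ] at hvan
        have hsolve : B.xm (r + 1) Ψ
            = ∑ e ∈ Finset.range r, ((-1 : ℂ) ^ (r + e + 1) * Lam d (r - e))
                • B.xm (e + 1) Ψ := by
          have h1 : ((-1 : ℂ) ^ r * Lam d (r - r)) • B.xm (r + 1) Ψ
              = - ∑ e ∈ Finset.range r, ((-1 : ℂ) ^ e * Lam d (r - e)) • B.xm (e + 1) Ψ := by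
            rw [eq_neg_iff_add_eq_zero, add_comm]
            exact hvan
          rw [Nat.sub_self, Lam_zero, mul_one] at h1
          have h2 := congrArg (fun v => ((-1 : ℂ) ^ r) • v) h1
          simp only [smul_smul, ← pow_add] at h2
          have h3 : ((-1 : ℂ)) ^ (r + r) = 1 := Even.neg_one_pow ⟨r, by ring⟩
          rw [h3, one_smul] at h2
          rw [h2, smul_neg, Finset.smul_sum, ← Finset.sum_neg_distrib]
          refine Finset.sum_congr rfl fun e _ => ?_
          module
        simp only [Nat.add_zero]
        rw [hsolve, ← Finset.Ico_add_one_right_eq_Icc, Finset.sum_Ico_eq_sum_range]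
        have hr : r + 1 - 1 = r := by omega
        rw [hr]
        refine Finset.sum_congr rfl fun e he => ?_
        rw [Finset.mem_range] at he
        have h5 : 1 ≤ r - e := by omega
        have h6 : r - e ≤ r := by omega
        have h7 : r + 1 - (1 + e) = r - e := by omega
        have h8 : r - (1 + e) + 2 * (e + 1) = r + e + 1 := by omega
        have h9 : 1 + e = e + 1 := by omega
        rw [h7, h9, ← hlam' (r - e) h5 h6, ← h8, pow_add, pow_mul, neg_one_sq, one_pow,
          mul_one, show r - (1 + e) = r - (e + 1) from by omega]
    | succ m ih =>
        have happ := congrArg (fun v => B.h 1 v) ih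
        simp only [map_sum, map_smul] at happ
        rw [hstep (r + 1 + m) (by omega)] at happ
        have hR : ∀ k ∈ Finset.Icc 1 r,
            ((-1 : ℂ) ^ (r - k) * lam (r + 1 - k)) • B.h 1 (B.xm (k + m) Ψ)
            = (d 1 * ((-1 : ℂ) ^ (r - k) * lam (r + 1 - k))) • B.xm (k + m) Ψ
              - (2 : ℂ) • (((-1 : ℂ) ^ (r - k) * lam (r + 1 - k)) • B.xm (k + m + 1) Ψ) := by
          intro k hk
          rw [Finset.mem_Icc] at hk
          rw [hstep (k + m) (by omega)]
          module
        rw [Finset.sum_congr rfl hR, Finset.sum_sub_distrib] at happ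
        have hfirst : ∑ k ∈ Finset.Icc 1 r,
            (d 1 * ((-1 : ℂ) ^ (r - k) * lam (r + 1 - k))) • B.xm (k + m) Ψ
            = d 1 • B.xm (r + 1 + m) Ψ := by
          rw [ih, Finset.smul_sum]
          refine Finset.sum_congr rfl fun k _ => ?_
          module
        rw [hfirst, ← Finset.smul_sum, sub_right_inj] at happ
        have hcancel := smul_right_injective V (two_ne_zero (α := ℂ)) happ
        have hidx : r + 1 + (m + 1) = r + 1 + m + 1 := by omega
        rw [hidx, hcancel]
        refine Finset.sum_congr rfl fun k _ => ?_
        have hkm : k + (m + 1) = k + m + 1 := by omega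
        rw [hkm]
  refine ⟨part1, fun m => ?_⟩
  have happ := congrArg (fun v => B.xp 0 v) (part1 m)
  simp only [map_sum, map_smul] at happ
  rw [hxp0 (r + 1 + m) (by omega)] at happ
  have hR : ∀ k ∈ Finset.Icc 1 r,
      ((-1 : ℂ) ^ (r - k) * lam (r + 1 - k)) • B.xp 0 (B.xm (k + m) Ψ)
      = ((-1 : ℂ) ^ (r - k) * lam (r + 1 - k) * d (k + m)) • Ψ := by
    intro k hk
    rw [Finset.mem_Icc] at hk
    rw [hxp0 (k + m) (by omega), smul_smul]
  rw [Finset.sum_congr rfl hR, ← Finset.sum_smul] at happ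
  exact scalar_eq _ _ happ
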